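/- Let 𝔽 be a field of characteristic zero and p, q ∈ 𝔽[x_1,…,x_n]. Let c_α(a) ∈ S_{p,q}, let k ∈ ℕ with k ≥ 2, and let r, s ∈ 𝔽^n. If H^1(c_β)(r) = H^1(c_β)(s) for all β ∈ ℕ^n with β ≥ α and |β| = |α| + k − 1 (and c_β ∈ S_{p,q}), then H^k(c_α)(r) = H^k(c_α)(s). -/

import Mathlib

open MvPolynomial

noncomputable section

variable {F : Type*} [Field F] [CharZero F] {n : ℕ}

/-- `p(x+a) - q(x)` as a polynomial in the variables `x` with coefficients in `F[a]`. -/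
def shiftDiff (p q : MvPolynomial (Fin n) F) :
    MvPolynomial (Fin n) (MvPolynomial (Fin n) F) :=
  aeval (fun i => X i + C (X i)) p - map C q

set_option linter.unusedSectionVars false
set_option linter.unusedVariables false

lemma degree_eq_univ_sum (d : Fin n →₀ ℕ) : d.degree = ∑ j, d j := by
  rw [Finsupp.degree]
  exact Finset.sum_subset (Finset.subset_univ _) (by
    intro x _ hx
    simpa using Finsupp.notMem_support_iff.mp hx)

lemma fsum_eq_univ_sum (d : Fin n →₀ ℕ) : (d.sum fun _ e => e) = ∑ j, d j := by
  rw [Finsupp.sum]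
  exact Finset.sum_subset (Finset.subset_univ _) (by
    intro x _ hx
    simpa using Finsupp.notMem_support_iff.mp hx)

lemma choose_id (a e : ℕ) : (e + 1) * (a + e + 1).choose a = (a + e).choose a * (a + e + 1) := by
  have h1 : (a + e + 1).choose a = (a + e + 1).choose (e + 1) := by
    have := Nat.choose_symm (n := a + e + 1) (k := e + 1) (by omega)
    simpa [show a + e + 1 - (e + 1) = a by omega] using this
  have h3 : (a + e).choose a = (a + e).choose e := by
    have := Nat.choose_symm (n := a + e) (k := e) (by omega)
    simpa [show a + e - e = a by omega] using this
  have h2 := Nat.add_one_mul_choose_eq (a + e) e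
  rw [h1, h3]
  calc (e + 1) * (a + e + 1).choose (e + 1) = (a + e + 1).choose (e + 1) * (e + 1) := by ring
  _ = (a + e).succ * (a + e).choose e := h2.symm
  _ = (a + e).choose e * (a + e + 1) := by rw [Nat.succ_eq_add_one]; ring

lemma coeff_pderiv' (i : Fin n) (f : MvPolynomial (Fin n) F) (ε : Fin n →₀ ℕ) :
    coeff ε (pderiv i f) = (ε i + 1) * coeff (ε + Finsupp.single i 1) f := by
  induction f using MvPolynomial.induction_on' with
  | add f g hf hg => simp only [map_add, coeff_add, hf, hg]; ring
  | monomial m c =>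
    rw [pderiv_monomial, coeff_monomial, coeff_monomial]
    by_cases h2 : m = ε + Finsupp.single i 1
    · subst h2
      have e1 : (ε + Finsupp.single i 1) - Finsupp.single i 1 = ε := by
        ext j
        simp only [Finsupp.tsub_apply, Finsupp.add_apply, Finsupp.single_apply]
        omega
      rw [if_pos e1, if_pos rfl]
      simp only [Finsupp.add_apply, Finsupp.single_apply, if_pos rfl]
      push_cast
      ring
    · rw [if_neg h2, mul_zero]
      split_ifs with h3
      · by_cases hm : m i = 0
        · simp [hm]
        · exfalso
          apply h2
          ext j
          have := Finsupp.ext_iff.mp h3 j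
          simp only [Finsupp.tsub_apply, Finsupp.add_apply, Finsupp.single_apply] at this ⊢
          by_cases hij : i = j
          · subst hij; simp only [eq_self_iff_true, if_true] at this ⊢; omega
          · simp only [if_neg hij] at this ⊢; omega
      · rfl

lemma single_of_degree_one (d : Fin n →₀ ℕ) (hd : ∑ j, d j = 1) :
    ∃ i, d = Finsupp.single i 1 := by
  obtain ⟨i, hi⟩ : ∃ i, d i ≠ 0 := by
    by_contra h
    push_neg at h
    rw [Finset.sum_eq_zero (fun j _ => h j)] at hd
    omega
  refine ⟨i, ?_⟩
  have hle : ∀ j, d j ≤ 1 := fun j =>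
    hd ▸ Finset.single_le_sum (f := fun k => d k) (fun _ _ => Nat.zero_le _) (Finset.mem_univ j)
  have hdi : d i = 1 := by have := hle i; omega
  ext j
  rw [Finsupp.single_apply]
  by_cases hij : i = j
  · subst hij; simpa using hdi
  · rw [if_neg hij]
    by_contra hj
    have h3 : d j ≤ ∑ k ∈ Finset.univ.erase i, d k :=
      Finset.single_le_sum (f := fun k => d k) (fun _ _ => Nat.zero_le _)
        (Finset.mem_erase.mpr ⟨fun h => hij h.symm, Finset.mem_univ j⟩)
    have h4 := Finset.add_sum_erase Finset.univ (fun k => d k) (Finset.mem_univ i)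
    omega

lemma eval_homogeneousComponent_one (f : MvPolynomial (Fin n) F) (v : Fin n → F) :
    eval v (homogeneousComponent 1 f) = ∑ i, coeff (Finsupp.single i 1) f * v i := by
  have hrepr : homogeneousComponent 1 f
      = ∑ i, monomial (Finsupp.single i 1) (coeff (Finsupp.single i 1) f) := by
    apply MvPolynomial.ext
    intro d
    rw [coeff_homogeneousComponent, coeff_sum]
    simp_rw [coeff_monomial]
    by_cases hd : d.degree = 1
    · obtain ⟨i0, rfl⟩ := single_of_degree_one d (by rw [← degree_eq_univ_sum, hd])
      rw [if_pos hd]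
      rw [Finset.sum_eq_single i0]
      · simp
      · intro b _ hb
        rw [if_neg (fun hcon => hb (Finsupp.single_left_injective one_ne_zero hcon))]
      · intro hni; exact absurd (Finset.mem_univ i0) hni
    · rw [if_neg hd]
      symm
      apply Finset.sum_eq_zero
      intro i _
      rw [if_neg]
      intro hcon
      apply hd
      rw [← hcon, degree_eq_univ_sum]
      simp [Finsupp.single_apply]
  rw [hrepr, map_sum]
  apply Finset.sum_congr rfl
  intro i _
  rw [eval_monomial]
  rw [Finsupp.prod_single_index (by simp)]
  rw [pow_one]

/-- `∏ i (x_i + a_i)^(β i)` -/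
def shiftProd (F : Type*) [Field F] {n : ℕ} (β : Fin n →₀ ℕ) :
    MvPolynomial (Fin n) (MvPolynomial (Fin n) F) :=
  β.prod fun i m => (X i + C (X i)) ^ m

lemma coeff_coeff_shiftProd (β : Fin n →₀ ℕ) : ∀ γ δ : Fin n →₀ ℕ,
    coeff δ (coeff γ (shiftProd F β)) =
      if γ + δ = β then ((∏ j, (β j).choose (γ j) : ℕ) : F) else 0 := by
  generalize hN : (∑ j, β j) = N
  induction N generalizing β with
  | zero =>
    have hβ : β = 0 := by
      ext j
      have := Finset.sum_eq_zero_iff.mp hN j (Finset.mem_univ j)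
      simpa using this
    subst hβ
    intro γ δ
    rw [shiftProd, Finsupp.prod_zero_index]
    rcases eq_or_ne γ 0 with rfl | hγ
    · rcases eq_or_ne δ 0 with rfl | hδ
      · simp [coeff_one]
      · simp [coeff_one, hδ, Ne.symm hδ]
    · have hne : γ + δ ≠ 0 := by
        intro hcon
        apply hγ
        ext j
        have := Finsupp.ext_iff.mp hcon j
        simp only [Finsupp.add_apply, Finsupp.coe_zero, Pi.zero_apply] at this ⊢
        omega
      rw [coeff_one, if_neg (fun h => hγ h.symm), coeff_zero, if_neg hne]
  | succ N ih =>
    intro γ δ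
    have hpos : ∃ i, β i ≠ 0 := by
      by_contra hc
      push_neg at hc
      simp [hc] at hN
    obtain ⟨i, hi⟩ := hpos
    set β' : Fin n →₀ ℕ := β - Finsupp.single i 1 with hβ'
    have hβeq : β = β' + Finsupp.single i 1 := by
      ext j
      simp only [hβ', Finsupp.add_apply, Finsupp.tsub_apply, Finsupp.single_apply]
      by_cases hj : i = j
      · subst hj; simp; omega
      · simp [hj]
    have happ : ∀ j, β j = β' j + (if i = j then 1 else 0) := by
      intro j
      conv_lhs => rw [hβeq]
      simp [Finsupp.single_apply]
    have happi : β i = β' i + 1 := by rw [happ i]; simp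
    have hsum' : ∑ j, β' j = N := by
      have : ∑ j, β j = (∑ j, β' j) + 1 := by
        conv_lhs => rw [hβeq]
        simp only [Finsupp.add_apply, Finset.sum_add_distrib]
        congr 1
        simp [Finsupp.single_apply]
      omega
    have hprod : shiftProd F β = shiftProd F β' * (X i + C (X i)) := by
      rw [hβeq]
      unfold shiftProd
      rw [Finsupp.prod_add_index' (fun a => pow_zero _) (fun a b c => pow_add _ _ _)]
      congr 1
      rw [show (X i + C (X i) : MvPolynomial (Fin n) (MvPolynomial (Fin n) F)) = (X i + C (X i)) ^ 1 from (pow_one _).symm]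
      exact Finsupp.prod_single_index (pow_zero _)
    rw [hprod, mul_add, coeff_add, coeff_add, coeff_mul_X',
      mul_comm (shiftProd F β') (C (X i)), coeff_C_mul,
      apply_ite (coeff δ), coeff_zero, coeff_X_mul',
      ih β' hsum' (γ - Finsupp.single i 1) δ, ih β' hsum' γ (δ - Finsupp.single i 1)]
    have imp1 : ((γ - Finsupp.single i 1) + δ = β') → γ i ≠ 0 → γ + δ = β := by
      intro h2 hg
      ext j
      have e2 := Finsupp.ext_iff.mp h2 j
      rw [happ j]
      simp only [Finsupp.add_apply, Finsupp.tsub_apply, Finsupp.single_apply] at e2 ⊢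
      by_cases hij : i = j
      · subst hij; simp only [eq_self_iff_true, if_true] at e2 ⊢; omega
      · simp only [if_neg hij] at e2 ⊢; omega
    have imp2 : (γ + (δ - Finsupp.single i 1) = β') → δ i ≠ 0 → γ + δ = β := by
      intro h2 hg
      ext j
      have e2 := Finsupp.ext_iff.mp h2 j
      rw [happ j]
      simp only [Finsupp.add_apply, Finsupp.tsub_apply, Finsupp.single_apply] at e2 ⊢
      by_cases hij : i = j
      · subst hij; simp only [eq_self_iff_true, if_true] at e2 ⊢; omega
      · simp only [if_neg hij] at e2 ⊢; omega
    by_cases hc : γ + δ = β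
    · rw [if_pos hc]
      have hcj : ∀ j, γ j + δ j = β' j + (if i = j then 1 else 0) := by
        intro j
        have h1 := Finsupp.ext_iff.mp hc j
        rw [happ j] at h1
        simpa using h1
      have hci : γ i + δ i = β' i + 1 := by
        have := hcj i
        simp only [eq_self_iff_true, if_true] at this
        exact this
      by_cases hgi : γ i = 0
      · have hns : i ∉ γ.support := by simp [hgi]
        have hds : i ∈ δ.support := by
          simp only [Finsupp.mem_support_iff]
          omega
        have hcond : γ + (δ - Finsupp.single i 1) = β' := by
          ext j
          have := hcj j
          simp only [Finsupp.add_apply, Finsupp.tsub_apply, Finsupp.single_apply] at this ⊢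
          by_cases hij : i = j
          · subst hij; simp only [eq_self_iff_true, if_true] at this ⊢; omega
          · simp only [if_neg hij] at this ⊢; omega
        rw [if_neg hns, if_pos hds, if_pos hcond, zero_add]
        congr 1
        apply Finset.prod_congr rfl
        intro j _
        rw [happ j]
        by_cases hij : i = j
        · subst hij; simp [hgi]
        · simp [hij]
      · by_cases hdi : δ i = 0
        · have hgs : i ∈ γ.support := by simp [Finsupp.mem_support_iff, hgi]
          have hnd : i ∉ δ.support := by simp [hdi]
          have hcond : (γ - Finsupp.single i 1) + δ = β' := by
            ext j
            have := hcj j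
            simp only [Finsupp.add_apply, Finsupp.tsub_apply, Finsupp.single_apply] at this ⊢
            by_cases hij : i = j
            · subst hij; simp only [eq_self_iff_true, if_true] at this ⊢; omega
            · simp only [if_neg hij] at this ⊢; omega
          rw [if_pos hgs, if_pos hcond, if_neg hnd, add_zero]
          congr 1
          apply Finset.prod_congr rfl
          intro j _
          rw [happ j]
          by_cases hij : i = j
          · subst hij
            have hgv : γ i = β' i + 1 := by omega
            simp [Finsupp.tsub_apply, Finsupp.single_apply, hgv]
          · simp [Finsupp.tsub_apply, Finsupp.single_apply, hij]
        · have hgs : i ∈ γ.support := by simp [Finsupp.mem_support_iff, hgi]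
          have hds : i ∈ δ.support := by simp [Finsupp.mem_support_iff, hdi]
          have hcond1 : (γ - Finsupp.single i 1) + δ = β' := by
            ext j
            have := hcj j
            simp only [Finsupp.add_apply, Finsupp.tsub_apply, Finsupp.single_apply] at this ⊢
            by_cases hij : i = j
            · subst hij; simp only [eq_self_iff_true, if_true] at this ⊢; omega
            · simp only [if_neg hij] at this ⊢; omega
          have hcond2 : γ + (δ - Finsupp.single i 1) = β' := by
            ext j
            have := hcj j
            simp only [Finsupp.add_apply, Finsupp.tsub_apply, Finsupp.single_apply] at this ⊢
            by_cases hij : i = j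
            · subst hij; simp only [eq_self_iff_true, if_true] at this ⊢; omega
            · simp only [if_neg hij] at this ⊢; omega
          rw [if_pos hgs, if_pos hds, if_pos hcond1, if_pos hcond2, ← Nat.cast_add]
          congr 1
          have e1 : ∏ j, (β' j).choose ((γ - Finsupp.single i 1 : Fin n →₀ ℕ) j)
              = (β' i).choose (γ i - 1) * ∏ j ∈ Finset.univ.erase i, (β' j).choose (γ j) := by
            rw [← Finset.mul_prod_erase Finset.univ _ (Finset.mem_univ i)]
            congr 1
            · simp [Finsupp.tsub_apply, Finsupp.single_apply]
            · apply Finset.prod_congr rfl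
              intro j hj
              have hji : ¬ (i = j) := fun h => (Finset.mem_erase.mp hj).1 h.symm
              simp [Finsupp.tsub_apply, Finsupp.single_apply, hji]
          have e2 : ∏ j, (β' j).choose (γ j)
              = (β' i).choose (γ i) * ∏ j ∈ Finset.univ.erase i, (β' j).choose (γ j) :=
            (Finset.mul_prod_erase Finset.univ _ (Finset.mem_univ i)).symm
          have e3 : ∏ j, (β j).choose (γ j)
              = (β' i + 1).choose (γ i) * ∏ j ∈ Finset.univ.erase i, (β' j).choose (γ j) := by
            rw [← Finset.mul_prod_erase Finset.univ _ (Finset.mem_univ i)]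
            congr 1
            · rw [happi]
            · apply Finset.prod_congr rfl
              intro j hj
              have hji : ¬ (i = j) := fun h => (Finset.mem_erase.mp hj).1 h.symm
              rw [happ j]
              simp [hji]
          rw [e1, e2, e3]
          obtain ⟨m, hm⟩ : ∃ m, γ i = m + 1 := ⟨γ i - 1, by omega⟩
          rw [hm]
          simp only [Nat.add_sub_cancel, Nat.choose_succ_succ]
          ring
    · rw [if_neg hc]
      split_ifs with h1 h2 h3 h4 h5 <;>
        first
          | exact absurd (imp1 (by assumption)
              (Finsupp.mem_support_iff.mp (by assumption))) hc
          | exact absurd (imp2 (by assumption)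
              (Finsupp.mem_support_iff.mp (by assumption))) hc
          | simp

lemma coeff_coeff_shiftDiff (p q : MvPolynomial (Fin n) F) (γ δ : Fin n →₀ ℕ) (hδ : δ ≠ 0) :
    coeff δ (coeff γ (shiftDiff p q))
      = ((∏ j, ((γ + δ) j).choose (γ j) : ℕ) : F) * coeff (γ + δ) p := by
  rw [shiftDiff, coeff_sub, coeff_sub, coeff_map, coeff_C, if_neg (fun h => hδ h.symm), sub_zero]
  conv_lhs => rw [p.as_sum]
  rw [map_sum, coeff_sum, coeff_sum]
  have hterm : ∀ β ∈ p.support,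
      coeff δ (coeff γ (aeval (fun i => X i + C (X i)) (monomial β (coeff β p))))
        = if β = γ + δ then ((∏ j, (β j).choose (γ j) : ℕ) : F) * coeff β p else 0 := by
    intro β _
    rw [aeval_monomial]
    have halg : (algebraMap F (MvPolynomial (Fin n) (MvPolynomial (Fin n) F))) (coeff β p)
        = C (C (coeff β p)) := rfl
    rw [halg]
    have : (β.prod fun i k => (X i + C (X i) : MvPolynomial (Fin n) (MvPolynomial (Fin n) F)) ^ k)
        = shiftProd F β := rfl
    rw [this, coeff_C_mul, coeff_C_mul, coeff_coeff_shiftProd]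
    by_cases h : γ + δ = β
    · rw [if_pos h, if_pos h.symm]; rw [← h]; ring
    · rw [if_neg h, if_neg (fun h' => h h'.symm), mul_zero]
  rw [Finset.sum_congr rfl hterm, Finset.sum_ite_eq' p.support (γ + δ)
    (fun β => ((∏ j, (β j).choose (γ j) : ℕ) : F) * coeff β p)]
  by_cases hmem : γ + δ ∈ p.support
  · rw [if_pos hmem]
  · rw [if_neg hmem, notMem_support_iff.mp hmem, mul_zero]

lemma derivative_aeval_line (s t : Fin n → F) (f : MvPolynomial (Fin n) F) :
    Polynomial.derivative
        (aeval (fun i => Polynomial.C (s i) + Polynomial.C (t i) * Polynomial.X) f)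
      = aeval (fun i => Polynomial.C (s i) + Polynomial.C (t i) * Polynomial.X)
          (∑ i, t i • pderiv i f) := by
  induction f using MvPolynomial.induction_on with
  | C c => simp
  | add f g hf hg =>
    simp only [map_add, Polynomial.derivative_add, hf, hg, smul_add, Finset.sum_add_distrib]
  | mul_X f j hf =>
    have expand : (∑ i, t i • pderiv i (f * X j)) = (∑ i, t i • pderiv i f) * X j + t j • f := by
      have step : ∀ i, t i • pderiv i (f * X j)
          = (t i • pderiv i f) * X j + t i • (f * (if i = j then 1 else 0)) := by
        intro i
        rw [pderiv_mul]
        by_cases hij : i = j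
        · subst hij
          simp only [pderiv_X_self, eq_self_iff_true, if_true, mul_one, smul_add, smul_mul_assoc]
        · rw [pderiv_X_of_ne (fun h => hij h.symm)]
          simp only [if_neg hij, mul_zero, add_zero, smul_zero, smul_mul_assoc]
      rw [Finset.sum_congr rfl (fun i _ => step i), Finset.sum_add_distrib]
      congr 1
      · exact (Finset.sum_mul _ _ _).symm
      · rw [Finset.sum_congr rfl (fun i _ => by rw [mul_ite, mul_one, mul_zero, smul_ite, smul_zero])]
        rw [Finset.sum_ite_eq' Finset.univ j (fun i => t i • f), if_pos (Finset.mem_univ j)]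
    have hmul : (aeval fun i => Polynomial.C (s i) + Polynomial.C (t i) * Polynomial.X) (f * X j)
        = (aeval fun i => Polynomial.C (s i) + Polynomial.C (t i) * Polynomial.X) f
          * (Polynomial.C (s j) + Polynomial.C (t j) * Polynomial.X) := by
      rw [map_mul, aeval_X]
    rw [expand, hmul, Polynomial.derivative_mul, hf]
    rw [show (aeval fun i => Polynomial.C (s i) + Polynomial.C (t i) * Polynomial.X)
          ((∑ i : Fin n, t i • pderiv i f) * X j + t j • f)
        = (aeval fun i => Polynomial.C (s i) + Polynomial.C (t i) * Polynomial.X)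
            (∑ i : Fin n, t i • pderiv i f)
            * (Polynomial.C (s j) + Polynomial.C (t j) * Polynomial.X)
          + Polynomial.C (t j)
            * (aeval fun i => Polynomial.C (s i) + Polynomial.C (t i) * Polynomial.X) f from by
      rw [map_add, map_mul, aeval_X, map_smul, Polynomial.smul_eq_C_mul]]
    simp only [Polynomial.derivative_add, Polynomial.derivative_C, Polynomial.derivative_mul,
      Polynomial.derivative_X, zero_add, mul_one]
    ring

lemma eval_aeval_line (s t : Fin n → F) (u : F) (f : MvPolynomial (Fin n) F) :
    Polynomial.eval u
        (aeval (fun i => Polynomial.C (s i) + Polynomial.C (t i) * Polynomial.X) f)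
      = eval (fun i => s i + t i * u) f := by
  induction f using MvPolynomial.induction_on with
  | C c => simp
  | add f g hf hg => simp [hf, hg]
  | mul_X f j hf => simp [hf]

lemma eval_eq_of_directional_deriv_zero (g : MvPolynomial (Fin n) F) (s t : Fin n → F)
    (hD : (∑ i, t i • pderiv i g) = 0) :
    eval (fun i => s i + t i) g = eval s g := by
  have hder : Polynomial.derivative
      (aeval (fun i => Polynomial.C (s i) + Polynomial.C (t i) * Polynomial.X) g) = 0 := by
    rw [derivative_aeval_line, hD, map_zero]
  have hconst := Polynomial.eq_C_of_derivative_eq_zero hder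
  have e1 := eval_aeval_line s t 1 g
  have e0 := eval_aeval_line s t 0 g
  rw [hconst] at e0 e1
  simp only [Polynomial.eval_C] at e0 e1
  have h1 : (fun i => s i + t i * 1) = fun i => s i + t i := by funext i; ring
  have h0 : (fun i => s i + t i * 0) = s := by funext i; ring
  rw [h1] at e1
  rw [h0] at e0
  rw [← e1, e0]

/-- Let `c_α ∈ S_{p,q}`, `k ≥ 2` and `r, s ∈ F^n`. If the degree-one
homogeneous components of all `c_β ∈ S_{p,q}` with `β ≥ α` and `|β| = |α| + k - 1` take the
same value at `r` and at `s`, then so does the degree-`k` homogeneous component of `c_α`. -/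
theorem homogeneousComponent_eval_eq (p q : MvPolynomial (Fin n) F)
    (α : Fin n →₀ ℕ) (hα : α ∈ (shiftDiff p q).support)
    (k : ℕ) (hk : 2 ≤ k) (r s : Fin n → F)
    (h : ∀ β ∈ (shiftDiff p q).support, α ≤ β →
        (β.sum fun _ e => e) + 1 = (α.sum fun _ e => e) + k →
        eval r (homogeneousComponent 1 (coeff β (shiftDiff p q))) =
          eval s (homogeneousComponent 1 (coeff β (shiftDiff p q)))) :
    eval r (homogeneousComponent k (coeff α (shiftDiff p q))) =
      eval s (homogeneousComponent k (coeff α (shiftDiff p q))) := by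
  set c := coeff α (shiftDiff p q) with hc
  set g := homogeneousComponent k c with hg
  set t : Fin n → F := fun i => r i - s i with ht
  have h' : ∀ β : Fin n →₀ ℕ, α ≤ β → (∑ j, β j) + 1 = (∑ j, α j) + k →
      ∑ i, coeff (Finsupp.single i 1) (coeff β (shiftDiff p q)) * t i = 0 := by
    intro β hle hdeg
    by_cases hmem : β ∈ (shiftDiff p q).support
    · have heq := h β hmem hle (by rw [fsum_eq_univ_sum, fsum_eq_univ_sum]; omega)
      rw [eval_homogeneousComponent_one, eval_homogeneousComponent_one] at heq
      have hsub := sub_eq_zero.mpr heq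
      rw [← Finset.sum_sub_distrib] at hsub
      calc ∑ i, coeff (Finsupp.single i 1) (coeff β (shiftDiff p q)) * t i
          = ∑ i, (coeff (Finsupp.single i 1) (coeff β (shiftDiff p q)) * r i
              - coeff (Finsupp.single i 1) (coeff β (shiftDiff p q)) * s i) := by
            apply Finset.sum_congr rfl
            intro i _
            rw [ht]
            ring
        _ = 0 := hsub
    · rw [notMem_support_iff.mp hmem]
      simp
  have hsingle : ∀ (ε : Fin n →₀ ℕ) (i : Fin n),
      ∑ j, (ε + Finsupp.single i 1 : Fin n →₀ ℕ) j = (∑ j, ε j) + 1 := by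
    intro ε i
    simp only [Finsupp.add_apply, Finset.sum_add_distrib]
    congr 1
    simp [Finsupp.single_apply]
  have hD : (∑ i, t i • pderiv i g) = 0 := by
    apply MvPolynomial.ext
    intro ε
    rw [coeff_zero, coeff_sum]
    simp_rw [coeff_smul, coeff_pderiv']
    by_cases hε : ∑ j, ε j = k - 1
    · have hgc : ∀ i : Fin n, coeff (ε + Finsupp.single i 1) g
          = ((∏ j, (((α + ε + Finsupp.single i 1 : Fin n →₀ ℕ) j)).choose (α j) : ℕ) : F)
              * coeff (α + ε + Finsupp.single i 1) p := by
        intro i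
        rw [hg, coeff_homogeneousComponent, if_pos (by
          rw [degree_eq_univ_sum, hsingle ε i]
          omega), hc,
          coeff_coeff_shiftDiff p q α (ε + Finsupp.single i 1) (by
            intro hzero
            have := Finsupp.ext_iff.mp hzero i
            simp [Finsupp.single_apply] at this),
          ← add_assoc]
      have hB : ∀ i : Fin n,
          (∏ j, (((α + ε + Finsupp.single i 1 : Fin n →₀ ℕ) j)).choose ((α + ε : Fin n →₀ ℕ) j) : ℕ) = (α + ε : Fin n →₀ ℕ) i + 1 := by
        intro i
        rw [← Finset.mul_prod_erase Finset.univ _ (Finset.mem_univ i)]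
        have h1 : (((α + ε + Finsupp.single i 1 : Fin n →₀ ℕ) i)).choose ((α + ε) i) = (α + ε : Fin n →₀ ℕ) i + 1 := by
          have : ((α + ε + Finsupp.single i 1 : Fin n →₀ ℕ) i) = (α + ε : Fin n →₀ ℕ) i + 1 := by
            simp [Finsupp.single_apply]
          rw [this, Nat.choose_succ_self_right]
        have h2 : ∏ j ∈ Finset.univ.erase i,
            (((α + ε + Finsupp.single i 1 : Fin n →₀ ℕ) j)).choose ((α + ε : Fin n →₀ ℕ) j) = 1 := by
          apply Finset.prod_eq_one
          intro j hj
          have hji : ¬ i = j := fun hh => (Finset.mem_erase.mp hj).1 hh.symm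
          have : ((α + ε + Finsupp.single i 1 : Fin n →₀ ℕ) j) = (α + ε) j := by
            simp [Finsupp.single_apply, hji]
          rw [this, Nat.choose_self]
        rw [h1, h2, mul_one]
      have hnat : ∀ i : Fin n, (ε i + 1) * (∏ j, (((α + ε + Finsupp.single i 1 : Fin n →₀ ℕ) j)).choose (α j))
          = (∏ j, (((α + ε : Fin n →₀ ℕ) j)).choose (α j)) * ((α + ε : Fin n →₀ ℕ) i + 1) := by
        intro i
        rw [← Finset.mul_prod_erase Finset.univ
            (fun j => (((α + ε + Finsupp.single i 1 : Fin n →₀ ℕ) j)).choose (α j)) (Finset.mem_univ i),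
          ← Finset.mul_prod_erase Finset.univ
            (fun j => (((α + ε : Fin n →₀ ℕ) j)).choose (α j)) (Finset.mem_univ i)]
        have heq : ∏ j ∈ Finset.univ.erase i, (((α + ε + Finsupp.single i 1 : Fin n →₀ ℕ) j)).choose (α j)
            = ∏ j ∈ Finset.univ.erase i, (((α + ε : Fin n →₀ ℕ) j)).choose (α j) := by
          apply Finset.prod_congr rfl
          intro j hj
          have hji : ¬ i = j := fun hh => (Finset.mem_erase.mp hj).1 hh.symm
          have : ((α + ε + Finsupp.single i 1 : Fin n →₀ ℕ) j) = (α + ε) j := by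
            simp [Finsupp.single_apply, hji]
          rw [this]
        rw [heq]
        have e1 : ((α + ε + Finsupp.single i 1 : Fin n →₀ ℕ) i) = α i + ε i + 1 := by
          simp [Finsupp.single_apply]
        have e2 : (α + ε : Fin n →₀ ℕ) i = α i + ε i := by simp
        rw [e1, e2, ← Nat.mul_assoc, Nat.mul_comm (ε i + 1) ((α i + ε i + 1).choose (α i))]
        rw [Nat.mul_comm ((α i + ε i + 1).choose (α i)) (ε i + 1), choose_id (α i) (ε i)]
        ring
      have hkey := h' (α + ε) (by
          rw [Finsupp.le_def]
          intro j
          rw [Finsupp.add_apply]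
          exact Nat.le_add_right _ _)
        (by
          have : ∑ j, (α + ε : Fin n →₀ ℕ) j = (∑ j, α j) + (∑ j, ε j) := by
            simp [Finsupp.add_apply, Finset.sum_add_distrib]
          omega)
      have hkey2 : ∑ i, ((((α + ε : Fin n →₀ ℕ) i : ℕ) : F) + 1) * coeff (α + ε + Finsupp.single i 1) p * t i
          = 0 := by
        rw [← hkey]
        apply Finset.sum_congr rfl
        intro i _
        rw [coeff_coeff_shiftDiff p q (α + ε) (Finsupp.single i 1)
          (by
            intro hzero
            have := Finsupp.ext_iff.mp hzero i
            simp at this), hB i]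
        push_cast
        ring
      calc ∑ i, t i • ((((ε i : ℕ) : F) + 1) * coeff (ε + Finsupp.single i 1) g)
          = ∑ i, ((∏ j, (((α + ε : Fin n →₀ ℕ) j)).choose (α j) : ℕ) : F)
              * (((((α + ε : Fin n →₀ ℕ) i : ℕ) : F) + 1) * coeff (α + ε + Finsupp.single i 1) p * t i) := by
            apply Finset.sum_congr rfl
            intro i _
            rw [hgc i, smul_eq_mul]
            have hcast : (((ε i + 1) * (∏ j, (((α + ε + Finsupp.single i 1 : Fin n →₀ ℕ) j)).choose (α j)) : ℕ) : F)
                = (((∏ j, (((α + ε : Fin n →₀ ℕ) j)).choose (α j)) * ((α + ε : Fin n →₀ ℕ) i + 1) : ℕ) : F) := by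
              exact_mod_cast congrArg (Nat.cast (R := F)) (hnat i)
            rw [Nat.cast_mul, Nat.cast_mul, Nat.cast_add, Nat.cast_one, Nat.cast_add,
              Nat.cast_one] at hcast
            linear_combination (coeff (α + ε + Finsupp.single i 1) p * t i) * hcast
        _ = ((∏ j, (((α + ε : Fin n →₀ ℕ) j)).choose (α j) : ℕ) : F)
              * ∑ i, (((((α + ε : Fin n →₀ ℕ) i : ℕ) : F) + 1) * coeff (α + ε + Finsupp.single i 1) p * t i) := by
            rw [Finset.mul_sum]
        _ = 0 := by rw [hkey2, mul_zero]
    · apply Finset.sum_eq_zero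
      intro i _
      have hz : coeff (ε + Finsupp.single i 1) g = 0 := by
        rw [hg, coeff_homogeneousComponent, if_neg]
        rw [degree_eq_univ_sum, hsingle ε i]
        omega
      rw [hz, mul_zero, smul_zero]
  have hfin := eval_eq_of_directional_deriv_zero g s t hD
  have hr : (fun i => s i + t i) = r := by
    funext i
    rw [ht]
    ring
  rw [hr] at hfin
  exact hfin

end
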